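/- In a ≺-smooth fitness landscape with optimum x*, from any initial assignment x⁰ there exists a strictly fitness-increasing sequence of adjacent assignments from x⁰ to x* whose length equals the Hamming distance between x⁰ and x* (in particular, length at most n). -/

import Mathlib

variable {n : ℕ}

def flipBit (x : Fin n → Bool) (i : Fin n) : Fin n → Bool :=
  Function.update x i (!(x i))

def PrecSmooth (r : Fin n → Fin n → Prop) (f : (Fin n → Bool) → ℤ)
    (xs : Fin n → Bool) : Prop :=
  ∀ (j : Fin n) (x : Fin n → Bool), (∀ i, r i j → x i = xs i) →
    f (Function.update x j (xs j)) > f (Function.update x j (!(xs j)))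

/-- Hamming distance between two assignments. -/
def hamDist (x y : Fin n → Bool) : ℕ :=
  (Finset.univ.filter fun i => x i ≠ y i).card

lemma precSmooth_key
    (f : (Fin n → Bool) → ℤ) (r : Fin n → Fin n → Prop)
    (hr : IsStrictOrder (Fin n) r) (xs : Fin n → Bool)
    (hs : PrecSmooth r f xs) :
    ∀ d : ℕ, ∀ x0 : Fin n → Bool, hamDist x0 xs = d →
    ∃ p : ℕ → (Fin n → Bool),
      p 0 = x0 ∧ p d = xs ∧
      ∀ t < d,
        (∃ i, p (t + 1) = flipBit (p t) i) ∧ f (p t) < f (p (t + 1)) := by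
  intro d
  induction d with
  | zero =>
    intro x0 h0
    have hx : x0 = xs := by
      funext i
      by_contra hi
      have : i ∈ Finset.univ.filter fun i => x0 i ≠ xs i := by
        simp [hi]
      simp [hamDist, Finset.card_eq_zero] at h0
      exact hi (h0 (x := i))
    exact ⟨fun _ => xs, by rw [hx], rfl, by omega⟩
  | succ d ih =>
    intro x0 h0
    have h0' : (Finset.univ.filter fun i => x0 i ≠ xs i).card = d + 1 := h0
    have hne : (Finset.univ.filter fun i => x0 i ≠ xs i).Nonempty := by
      rw [← Finset.card_pos, h0']; omega
    have hwf : WellFounded r := by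
      haveI := hr.toIrrefl; haveI := hr.toIsTrans
      exact Finite.wellFounded_of_trans_of_irrefl r
    obtain ⟨m, hmS, hmin⟩ := hwf.has_min
      (↑(Finset.univ.filter fun i => x0 i ≠ xs i)) (by exact_mod_cast hne)
    have hm : x0 m ≠ xs m := by simpa using hmS
    set x1 := Function.update x0 m (xs m) with hx1
    have hflip : x1 = flipBit x0 m := by
      rw [hx1, flipBit]
      congr 1
      cases hb : x0 m <;> cases hb' : xs m <;> simp_all
    have hfilter : (Finset.univ.filter fun i => x1 i ≠ xs i)
        = (Finset.univ.filter fun i => x0 i ≠ xs i).erase m := by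
      ext i
      by_cases him : i = m <;> simp [hx1, Function.update_apply, him, hm]
    have hdist : hamDist x1 xs = d := by
      rw [hamDist, hfilter, Finset.card_erase_of_mem (by simpa using hmS), h0']; omega
    have hlt : f x0 < f x1 := by
      have hmin' : ∀ i, r i m → x0 i = xs i := by
        intro i hi
        by_contra hne'
        exact hmin i (by simpa using hne') hi
      have := hs m x0 hmin'
      have hx0m : (!(xs m)) = x0 m := by
        cases hb : x0 m <;> cases hb' : xs m <;> simp_all
      rwa [hx0m, Function.update_eq_self] at this
    obtain ⟨p', hp0, hpd, hpstep⟩ := ih x1 hdist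
    refine ⟨fun t => if t = 0 then x0 else p' (t - 1), by simp, by simp [hpd], ?_⟩
    intro t ht
    cases t with
    | zero =>
      simp only [if_pos rfl, if_neg (by omega : (0:ℕ)+1 ≠ 0)]
      exact ⟨⟨m, by simpa [hp0] using hflip⟩, by simpa [hp0] using hlt⟩
    | succ s =>
      have hs' : s < d := by omega
      obtain ⟨⟨i, hi⟩, hlt'⟩ := hpstep s hs'
      constructor
      · exact ⟨i, by simpa using hi⟩
      · simpa using hlt'

theorem precSmooth_direct_ascent
    (f : (Fin n → Bool) → ℤ) (r : Fin n → Fin n → Prop)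
    (hr : IsStrictOrder (Fin n) r) (xs : Fin n → Bool)
    (hs : PrecSmooth r f xs) (x0 : Fin n → Bool) :
    hamDist x0 xs ≤ n ∧
    ∃ p : ℕ → (Fin n → Bool),
      p 0 = x0 ∧ p (hamDist x0 xs) = xs ∧
      ∀ t < hamDist x0 xs,
        (∃ i, p (t + 1) = flipBit (p t) i) ∧ f (p t) < f (p (t + 1)) := by
  constructor
  · calc hamDist x0 xs ≤ Finset.univ.card := Finset.card_filter_le _ _
    _ = n := by simp
  · exact precSmooth_key f r hr xs hs _ x0 rfl
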